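/- For 0 < y < 1, c > 0, γ = 1/(1-y): if a > γ(1 + √(c+y-cy)) then φ(a) > b, where φ(x) = γx(x-1+c)/(x-γ) and b = ((1+√(c+y-cy))/(1-y))². -/
import Mathlib


theorem phi_gt_right_edge (y c a : ℝ) (hy : 0 < y) (hy1 : y < 1) (hc : 0 < c)
    (ha : a > (1/(1-y)) * (1 + Real.sqrt (c + y - c*y))) :
    (1/(1-y)) * a * (a - 1 + c) / (a - 1/(1-y))
      > ((1 + Real.sqrt (c + y - c*y)) / (1 - y))^2 := by
  have h1 : 0 < 1 - y := by linarith
  set s := Real.sqrt (c + y - c*y) with hsdef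
  have hs0 : 0 ≤ s := Real.sqrt_nonneg _
  have hs2 : s^2 = c + y - c*y := Real.sq_sqrt (by nlinarith)
  have hg : (0:ℝ) < 1/(1-y) := by positivity
  have hg1 : (1/(1-y)) * (1-y) = 1 := by field_simp
  have hag : 0 < a - 1/(1-y) := by nlinarith
  rw [gt_iff_lt, lt_div_iff₀ hag]
  have key : (1/(1-y)) * a * (a - 1 + c) - ((1 + s)/(1-y))^2 * (a - 1/(1-y))
      = (1/(1-y)) * (a - (1/(1-y))*(1+s))^2 := by
    linear_combination (-(1/(1-y))^2*a) * hs2 - (1/(1-y))*a*(c-1) * hg1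
  nlinarith [key, mul_pos hg (mul_pos hag hag), sq_nonneg (a - (1/(1-y))*(1+s)), mul_nonneg hg.le (sq_nonneg (a - (1/(1-y))*(1+s)))]
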